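/- Let π: Ỹ → X be a finite unramified cover of graphs. The image under π of any simple cycle on Ỹ is a backtrackless, tailless cycle on X. -/

import Mathlib

open SimpleGraph

/-- Local injectivity of a cover on edges sharing a middle vertex. -/
lemma cover_key {VY VX : Type*} {Y : SimpleGraph VY} {X : SimpleGraph VX}
    (π : Y →g X)
    (hcover : ∀ y : VY, Set.BijOn π (Y.neighborSet y) (X.neighborSet (π y)))
    {a b c : VY} (hba : Y.Adj b a) (hbc : Y.Adj b c)
    (h : Sym2.map π s(a, b) = Sym2.map π s(b, c)) : a = c := by
  simp only [Sym2.map_pair_eq, Sym2.eq_iff] at h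
  rcases h with ⟨h1, _⟩ | ⟨h1, _⟩
  · exact absurd (h1 ▸ π.map_adj hba) (X.irrefl)
  · exact (hcover b).injOn hba hbc h1

lemma cover_chain {VY VX : Type*} {Y : SimpleGraph VY} {X : SimpleGraph VX}
    (π : Y →g X)
    (hcover : ∀ y : VY, Set.BijOn π (Y.neighborSet y) (X.neighborSet (π y)))
    {a b : VY} (p : Y.Walk a b) (hp : p.support.Nodup) :
    (p.map π).edges.Chain' (· ≠ ·) := by
  induction p with
  | nil => simp [List.Chain']
  | @cons a c b h p ih =>
    cases p with
    | nil => simp [List.Chain']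
    | @cons c d b h' q =>
      simp only [Walk.support_cons, List.nodup_cons] at hp
      simp only [Walk.map_cons, Walk.edges_cons, List.Chain', List.isChain_cons_cons]
      refine ⟨?_, ?_⟩
      · intro he
        have : a = d := cover_key π hcover h.symm h' he
        subst this
        have : a ∈ (Walk.cons h' q).support := by
          simp [Walk.support_cons, q.start_mem_support]
        exact hp.1 (by simpa using this)
      · have := ih (by simpa using hp.2)
        simpa [Walk.map_cons, Walk.edges_cons, List.Chain'] using this

lemma nodup_head_ne_getLast {α : Type*} {l : List α} (hl : l.Nodup)
    (h2 : 2 ≤ l.length) (h : l ≠ []) (h' : l ≠ []) :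
    l.head h ≠ l.getLast h' := by
  cases l with
  | nil => simp at h
  | cons a t =>
    cases t with
    | nil => simp at h2
    | cons b t' =>
      simp only [List.head_cons]
      rw [List.getLast_cons (by simp)]
      intro heq
      have : (b :: t').getLast (by simp) ∈ b :: t' := List.getLast_mem _
      rw [← heq] at this
      simp only [List.nodup_cons] at hl
      exact hl.1 this

/-- Let `π : Y → X` be a finite unramified cover of graphs.  The
image under `π` of any simple cycle on `Y` is a backtrackless, tailless cycle
on `X`.

A cover is a surjective graph homomorphism mapping the neighborhood of each
vertex bijectively onto the neighborhood of its image.  A simple cycle on `Y`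
is a closed walk that is a cycle in the usual sense (`Walk.IsCycle`).
Backtrackless: no two consecutive edges of the image walk are equal; tailless:
the first and last edges of the image walk are distinct. -/
theorem image_of_simple_cycle_is_backtrackless_tailless
    {VY VX : Type*} [Fintype VY] [Fintype VX]
    (Y : SimpleGraph VY) (X : SimpleGraph VX)
    (π : Y →g X)
    (hsurj : Function.Surjective π)
    (hcover : ∀ y : VY, Set.BijOn π (Y.neighborSet y) (X.neighborSet (π y)))
    (v : VY) (w : Y.Walk v v) (hw : w.IsCycle) :
    (w.map π).edges.Chain' (· ≠ ·) ∧
    ∀ (h h' : (w.map π).edges ≠ []),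
      (w.map π).edges.head h ≠ (w.map π).edges.getLast h' := by
  have h3 := hw.three_le_length
  constructor
  · -- backtrackless
    cases w with
    | nil => simp [List.Chain']
    | @cons v b v h p =>
      have hp : p.IsPath := ((Walk.cons_isCycle_iff p h).mp hw).1
      cases p with
      | nil => simp [List.Chain']
      | @cons b c v h' q =>
        simp only [Walk.map_cons, Walk.edges_cons, List.Chain', List.isChain_cons_cons]
        refine ⟨?_, ?_⟩
        · intro he
          have hvc : v = c := cover_key π hcover h.symm h' he
          subst hvc
          have : q = Walk.nil := by
            have hq : q.IsPath := hp.of_cons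
            exact (Walk.isPath_iff_eq_nil (p := q)).mp hq
          subst this
          simp [Walk.length_cons] at h3
        · have := cover_chain π hcover (Walk.cons h' q) hp.support_nodup
          simpa [Walk.map_cons, Walk.edges_cons, List.Chain'] using this
  · -- tailless
    intro h h'
    have hwne : w.edges ≠ [] := by
      intro he
      have h0 : w.edges.length = 0 := by rw [he]; rfl
      rw [w.length_edges] at h0
      omega
    -- head and getLast of mapped edges
    have hmap : (w.map π).edges = w.edges.map (Sym2.map π) := w.edges_map π
    have hhead : (w.map π).edges.head h = Sym2.map π (w.edges.head hwne) := by
      simp [hmap, List.head_map]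
    have hlast : (w.map π).edges.getLast h' = Sym2.map π (w.edges.getLast hwne) := by
      simp [hmap, List.getLast_map]
    rw [hhead, hlast]
    -- decompose w and w.reverse
    have hnenil : w ≠ Walk.nil := hw.ne_nil
    obtain ⟨b, hvb, p, rfl⟩ := Walk.not_nil_iff.mp (by
      rw [Walk.not_nil_iff_lt_length]
      exact lt_of_lt_of_le (by norm_num) h3)
    set w := Walk.cons hvb p with hwdef
    have hrev : ¬ w.reverse.Nil := by
      rw [Walk.not_nil_iff_lt_length, Walk.length_reverse]
      exact lt_of_lt_of_le (by norm_num) h3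
    obtain ⟨u, hvu, q, hq⟩ := Walk.not_nil_iff.mp hrev
    -- head edge
    have hheadw : w.edges.head hwne = s(v, b) := by
      simp [hwdef]
    -- last edge
    have hlastw : w.edges.getLast hwne = s(v, u) := by
      have : w.edges.getLast hwne = w.edges.reverse.head (by simpa using hwne) := by
        rw [List.getLast_eq_head_reverse]
      rw [this]
      have : w.edges.reverse = w.reverse.edges := (w.edges_reverse).symm
      simp_rw [this, hq]
      simp
    rw [hheadw, hlastw]
    intro heq
    have hbu : b = u := by
      apply cover_key π hcover hvb hvu
      have : Sym2.map π s(b, v) = Sym2.map π s(v, b) := by rw [Sym2.eq_swap]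
      rw [this, heq]
    subst hbu
    -- then first edge = last edge of w, contradicting trail + length ≥ 2
    have hedges : w.edges.head hwne = w.edges.getLast hwne := by
      rw [hheadw, hlastw]
    have hnd : w.edges.Nodup := hw.isCircuit.isTrail.edges_nodup
    have h2 : 2 ≤ w.edges.length := by
      rw [w.length_edges]; omega
    exact nodup_head_ne_getLast hnd h2 hwne hwne hedges
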